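/- arXiv:1204.5541 — 2 statements merged into one kernel-verified Lean document; each statement's English description precedes it below -/
import Mathlib

section
/- Let e be a simple list expression (it contains no arithmetic operators, at most one occurrence of a list variable, and each string subexpression of e contains at most one occurrence of a string variable). If α and β are assignments such that the evaluations e^α and e^β are equal, then α(x) = β(x) for every variable x occurring in e. Consequently, for a fixed value v there is at most one assignment of the variables occurring in e under which e evaluates to v. -/
section GP2Expressions

/- GP 2 list expressions over disjoint variable sets IVar (integer variables),
   SVar (string variables), AVar (atom variables), LVar (list variables) and a
   fixed character set Char'. -/
variable (IVar SVar AVar LVar Char' : Type)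

/-- Binary arithmetic operators +, -, *, /. -/
inductive ArithOp : Type where
  | add | sub | mul | div

/-- Integer expressions: integer constants (including degree constants, which
    are treated as fixed integers), integer variables, negation and binary
    arithmetic operations. -/
inductive IExpr : Type where
  | const : ℤ → IExpr
  | ivar  : IVar → IExpr
  | neg   : IExpr → IExpr
  | binop : ArithOp → IExpr → IExpr → IExpr

/-- String expressions: string constants, string variables, concatenations. -/
inductive SExpr : Type where
  | const  : List Char' → SExpr
  | svar   : SVar → SExpr
  | concat : SExpr → SExpr → SExpr

/-- Atom expressions: integer expressions, string expressions, atom variables. -/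
inductive AExpr : Type where
  | int  : IExpr IVar → AExpr
  | str  : SExpr SVar Char' → AExpr
  | avar : AVar → AExpr

/-- List expressions: empty, atoms, list variables, concatenations. -/
inductive LExpr : Type where
  | empty  : LExpr
  | atom   : AExpr IVar SVar AVar Char' → LExpr
  | lvar   : LVar → LExpr
  | concat : LExpr → LExpr → LExpr

/-- Atom values: integers or character strings. -/
abbrev AtomVal : Type := ℤ ⊕ List Char'

/-- An assignment maps integer variables to integers, string variables to
    strings, atom variables to atom values and list variables to finite
    sequences of atom values. -/
structure Assignment : Type where
  i : IVar → ℤ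
  s : SVar → List Char'
  a : AVar → AtomVal Char'
  l : LVar → List (AtomVal Char')

variable {IVar SVar AVar LVar Char'}

/-- Integer semantics of the arithmetic operators. -/
def ArithOp.eval : ArithOp → ℤ → ℤ → ℤ
  | .add => (· + ·)
  | .sub => (· - ·)
  | .mul => (· * ·)
  | .div => (· / ·)

/-- Evaluation of integer expressions. -/
def IExpr.eval (α : Assignment IVar SVar AVar LVar Char') : IExpr IVar → ℤ
  | .const n => n
  | .ivar x => α.i x
  | .neg e => - e.eval α
  | .binop op e₁ e₂ => op.eval (e₁.eval α) (e₂.eval α)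

/-- Evaluation of string expressions ('.' is string concatenation). -/
def SExpr.eval (α : Assignment IVar SVar AVar LVar Char') :
    SExpr SVar Char' → List Char'
  | .const s => s
  | .svar x => α.s x
  | .concat e₁ e₂ => e₁.eval α ++ e₂.eval α

/-- Evaluation of atom expressions. -/
def AExpr.eval (α : Assignment IVar SVar AVar LVar Char') :
    AExpr IVar SVar AVar Char' → AtomVal Char'
  | .int e => Sum.inl (e.eval α)
  | .str e => Sum.inr (e.eval α)
  | .avar x => α.a x

/-- Evaluation of list expressions in (ℤ ∪ Char'*)*; an atom value is
    identified with the length-one sequence containing it, and ':' is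
    sequence concatenation. -/
def LExpr.eval (α : Assignment IVar SVar AVar LVar Char') :
    LExpr IVar SVar AVar LVar Char' → List (AtomVal Char')
  | .empty => []
  | .atom a => [a.eval α]
  | .lvar x => α.l x
  | .concat e₁ e₂ => e₁.eval α ++ e₂.eval α

/-- An integer expression contains no arithmetic operators (no negation and
    no binary operation) iff it is a constant or a variable. -/
def IExpr.noArith : IExpr IVar → Prop
  | .const _ => True
  | .ivar _ => True
  | .neg _ => False
  | .binop _ _ _ => False

/-- Number of occurrences of string variables in a string expression. -/
def SExpr.svarOccCount : SExpr SVar Char' → ℕ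
  | .const _ => 0
  | .svar _ => 1
  | .concat e₁ e₂ => e₁.svarOccCount + e₂.svarOccCount

/-- Number of occurrences of list variables in a list expression. -/
def LExpr.lvarOccCount : LExpr IVar SVar AVar LVar Char' → ℕ
  | .empty => 0
  | .atom _ => 0
  | .lvar _ => 1
  | .concat e₁ e₂ => e₁.lvarOccCount + e₂.lvarOccCount

/-- Every atom occurring in the list expression satisfies: integer
    subexpressions contain no arithmetic operators, and string subexpressions
    contain at most one occurrence of a string variable. -/
def LExpr.atomsSimple : LExpr IVar SVar AVar LVar Char' → Prop
  | .empty => True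
  | .atom (.int e) => e.noArith
  | .atom (.str e) => e.svarOccCount ≤ 1
  | .atom (.avar _) => True
  | .lvar _ => True
  | .concat e₁ e₂ => e₁.atomsSimple ∧ e₂.atomsSimple

/-- A list expression is simple if (1) it contains no arithmetic operators,
    (2) it contains at most one occurrence of a list variable, and (3) each
    occurrence of a string expression in it contains at most one occurrence of
    a string variable. -/
def LExpr.Simple (e : LExpr IVar SVar AVar LVar Char') : Prop :=
  e.atomsSimple ∧ e.lvarOccCount ≤ 1

/-- Occurrences of integer variables in a list expression. -/
def LExpr.ivarOccs : LExpr IVar SVar AVar LVar Char' → List IVar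
  | .empty => []
  | .atom (.int e) =>
      (let rec go : IExpr IVar → List IVar
        | .const _ => []
        | .ivar x => [x]
        | .neg e => go e
        | .binop _ e₁ e₂ => go e₁ ++ go e₂
      go e)
  | .atom _ => []
  | .lvar _ => []
  | .concat e₁ e₂ => e₁.ivarOccs ++ e₂.ivarOccs

/-- Occurrences of string variables in a list expression. -/
def LExpr.svarOccs : LExpr IVar SVar AVar LVar Char' → List SVar
  | .empty => []
  | .atom (.str e) =>
      (let rec go : SExpr SVar Char' → List SVar
        | .const _ => []
        | .svar x => [x]
        | .concat e₁ e₂ => go e₁ ++ go e₂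
      go e)
  | .atom _ => []
  | .lvar _ => []
  | .concat e₁ e₂ => e₁.svarOccs ++ e₂.svarOccs

/-- Occurrences of atom variables in a list expression. -/
def LExpr.avarOccs : LExpr IVar SVar AVar LVar Char' → List AVar
  | .empty => []
  | .atom (.avar x) => [x]
  | .atom _ => []
  | .lvar _ => []
  | .concat e₁ e₂ => e₁.avarOccs ++ e₂.avarOccs

/-- Occurrences of list variables in a list expression. -/
def LExpr.lvarOccs : LExpr IVar SVar AVar LVar Char' → List LVar
  | .empty => []
  | .atom _ => []
  | .lvar x => [x]
  | .concat e₁ e₂ => e₁.lvarOccs ++ e₂.lvarOccs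

/-- Two assignments agree on every variable occurring in `e`. -/
def AgreeOn (α β : Assignment IVar SVar AVar LVar Char')
    (e : LExpr IVar SVar AVar LVar Char') : Prop :=
  (∀ x ∈ e.ivarOccs, α.i x = β.i x) ∧
  (∀ x ∈ e.svarOccs, α.s x = β.s x) ∧
  (∀ x ∈ e.avarOccs, α.a x = β.a x) ∧
  (∀ x ∈ e.lvarOccs, α.l x = β.l x)

lemma sexpr_eval_const (e : SExpr SVar Char') (h : e.svarOccCount = 0)
    (α β : Assignment IVar SVar AVar LVar Char') : e.eval α = e.eval β := by
  induction e with
  | const s => rfl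
  | svar x => simp [SExpr.svarOccCount] at h
  | concat e₁ e₂ ih₁ ih₂ =>
    simp [SExpr.svarOccCount] at h
    simp [SExpr.eval, ih₁ h.1, ih₂ h.2]

lemma sexpr_agree (e : SExpr SVar Char') (h : e.svarOccCount ≤ 1)
    (α β : Assignment IVar SVar AVar LVar Char') (heq : e.eval α = e.eval β) :
    ∀ x ∈ LExpr.svarOccs.go e,
      α.s x = β.s x := by
  induction e with
  | const s => simp [LExpr.svarOccs.go]
  | svar x =>
    simp only [LExpr.svarOccs.go, List.mem_singleton]
    rintro y rfl
    simpa [SExpr.eval] using heq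
  | concat e₁ e₂ ih₁ ih₂ =>
    simp only [SExpr.svarOccCount] at h
    simp only [SExpr.eval] at heq
    have key : e₁.eval α = e₁.eval β ∧ e₂.eval α = e₂.eval β := by
      rcases Nat.eq_zero_or_pos e₁.svarOccCount with h1 | h1
      · have := sexpr_eval_const e₁ h1 α β
        rw [this] at heq
        exact ⟨this, List.append_cancel_left heq⟩
      · have h2 : e₂.svarOccCount = 0 := by omega
        have := sexpr_eval_const e₂ h2 α β
        rw [this] at heq
        exact ⟨List.append_cancel_right heq, this⟩
    simp only [LExpr.svarOccs.go, List.mem_append]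
    rintro x (hx | hx)
    · exact ih₁ (by omega) key.1 x hx
    · exact ih₂ (by omega) key.2 x hx

lemma lexpr_eval_length (e : LExpr IVar SVar AVar LVar Char')
    (h : e.lvarOccCount = 0) (α β : Assignment IVar SVar AVar LVar Char') :
    (e.eval α).length = (e.eval β).length := by
  induction e with
  | empty => rfl
  | atom a => rfl
  | lvar x => simp [LExpr.lvarOccCount] at h
  | concat e₁ e₂ ih₁ ih₂ =>
    simp only [LExpr.lvarOccCount] at h
    simp [LExpr.eval, ih₁ (by omega), ih₂ (by omega)]

lemma lexpr_agree (e : LExpr IVar SVar AVar LVar Char')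
    (hs : e.atomsSimple) (hl : e.lvarOccCount ≤ 1)
    (α β : Assignment IVar SVar AVar LVar Char') (heq : e.eval α = e.eval β) :
    AgreeOn α β e := by
  induction e with
  | empty =>
    refine ⟨?_, ?_, ?_, ?_⟩ <;> simp [LExpr.ivarOccs, LExpr.svarOccs,
      LExpr.avarOccs, LExpr.lvarOccs]
  | atom a =>
    have ha : a.eval α = a.eval β := by simpa [LExpr.eval] using heq
    cases a with
    | int ie =>
      cases ie with
      | const n =>
        refine ⟨?_, ?_, ?_, ?_⟩ <;> simp [LExpr.ivarOccs, LExpr.svarOccs,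
          LExpr.avarOccs, LExpr.lvarOccs, LExpr.ivarOccs.go]
      | ivar x =>
        have : α.i x = β.i x := by simpa [AExpr.eval, IExpr.eval] using ha
        refine ⟨?_, ?_, ?_, ?_⟩ <;> simp [LExpr.ivarOccs, LExpr.svarOccs,
          LExpr.avarOccs, LExpr.lvarOccs, LExpr.ivarOccs.go, this]
      | neg e => exact absurd hs (by simp [LExpr.atomsSimple, IExpr.noArith])
      | binop op e₁ e₂ =>
        exact absurd hs (by simp [LExpr.atomsSimple, IExpr.noArith])
    | str se =>
      have hse : se.eval α = se.eval β := by
        simpa [AExpr.eval] using ha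
      have hcount : se.svarOccCount ≤ 1 := hs
      refine ⟨?_, ?_, ?_, ?_⟩ <;> simp [LExpr.ivarOccs, LExpr.svarOccs,
        LExpr.avarOccs, LExpr.lvarOccs]
      exact sexpr_agree se hcount α β hse
    | avar x =>
      have : α.a x = β.a x := by simpa [AExpr.eval] using ha
      refine ⟨?_, ?_, ?_, ?_⟩ <;> simp [LExpr.ivarOccs, LExpr.svarOccs,
        LExpr.avarOccs, LExpr.lvarOccs, this]
  | lvar x =>
    have : α.l x = β.l x := by simpa [LExpr.eval] using heq
    refine ⟨?_, ?_, ?_, ?_⟩ <;> simp [LExpr.ivarOccs, LExpr.svarOccs,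
      LExpr.avarOccs, LExpr.lvarOccs, this]
  | concat e₁ e₂ ih₁ ih₂ =>
    obtain ⟨hs₁, hs₂⟩ := hs
    simp only [LExpr.lvarOccCount] at hl
    simp only [LExpr.eval] at heq
    have key : e₁.eval α = e₁.eval β ∧ e₂.eval α = e₂.eval β := by
      rcases Nat.eq_zero_or_pos e₁.lvarOccCount with h1 | h1
      · exact List.append_inj heq (lexpr_eval_length e₁ h1 α β)
      · have h2 : e₂.lvarOccCount = 0 := by omega
        exact List.append_inj' heq (lexpr_eval_length e₂ h2 α β)
    obtain ⟨A1, A2, A3, A4⟩ := ih₁ hs₁ (by omega) key.1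
    obtain ⟨B1, B2, B3, B4⟩ := ih₂ hs₂ (by omega) key.2
    refine ⟨?_, ?_, ?_, ?_⟩ <;>
      simp only [LExpr.ivarOccs, LExpr.svarOccs, LExpr.avarOccs,
        LExpr.lvarOccs, List.mem_append] <;>
      rintro x (hx | hx)
    exacts [A1 x hx, B1 x hx, A2 x hx, B2 x hx, A3 x hx, B3 x hx,
      A4 x hx, B4 x hx]

/-- if `e` is a simple list expression and two assignments α, β
    give equal evaluations e^α = e^β, then α and β agree on every variable
    occurring in e; consequently, for a fixed value v there is at most one
    assignment of the variables occurring in e under which e evaluates to v. -/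
theorem simple_list_expr_assignment_unique
    (e : LExpr IVar SVar AVar LVar Char') (hsimple : e.Simple) :
    (∀ α β : Assignment IVar SVar AVar LVar Char',
      e.eval α = e.eval β → AgreeOn α β e) ∧
    (∀ v : List (AtomVal Char'),
      ∀ α β : Assignment IVar SVar AVar LVar Char',
        e.eval α = v → e.eval β = v → AgreeOn α β e) := by
  obtain ⟨hs, hl⟩ := hsimple
  refine ⟨fun α β heq => lexpr_agree e hs hl α β heq,
    fun v α β hα hβ => lexpr_agree e hs hl α β (hα.trans hβ.symm)⟩

end GP2Expressions
end

section
/- Correctness of the acyclicity test: let E be a directed graph on a finite vertex type V such that the rule 'delete' is not applicable, i.e. for all vertices a, b with E a b there exists a vertex c with E c a (the source of every edge has an incoming edge). Then E is acyclic if and only if E contains no edges. -/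
/-- correctness of the acyclicity test. Let `E` be a directed
    graph on a finite vertex type `V` such that the rule 'delete' is not
    applicable, i.e. the source of every edge has an incoming edge. Then `E`
    is acyclic (no vertex lies on a directed cycle, i.e. no vertex is related
    to itself by the transitive closure of `E`) iff `E` contains no edges. -/
theorem acyclic_iff_no_edges_of_delete_not_applicable
    {V : Type} [Fintype V] (E : V → V → Prop)
    (h : ∀ a b, E a b → ∃ c, E c a) :
    (¬ ∃ x, Relation.TransGen E x x) ↔ ∀ a b, ¬ E a b := by
  constructor
  · intro hac a b hab
    exfalso
    apply hac
    -- build an infinite backward chain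
    classical
    let S := {x : V // ∃ y, E x y}
    have step : ∀ x : S, ∃ c : S, E c.1 x.1 := by
      rintro ⟨x, y, hxy⟩
      obtain ⟨c, hc⟩ := h x y hxy
      exact ⟨⟨c, x, hc⟩, hc⟩
    choose g hg using step
    let f : ℕ → S := fun n => g^[n] ⟨a, b, hab⟩
    have hf : ∀ n, E (f (n+1)).1 (f n).1 := by
      intro n
      have : f (n+1) = g (f n) := Function.iterate_succ_apply' g n _
      rw [this]; exact hg (f n)
    have chain : ∀ m n, n < m → Relation.TransGen E (f m).1 (f n).1 := by
      intro m
      induction m with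
      | zero => omega
      | succ m ih =>
        intro n hn
        rcases Nat.lt_succ_iff_lt_or_eq.mp hn with h' | h'
        · exact (ih n h').head (hf m)
        · subst h'; exact Relation.TransGen.single (hf n)
    have : ¬ Function.Injective fun n => (f n).1 := by
      intro hinj
      exact (Finite.of_injective _ hinj).false
    rw [Function.not_injective_iff] at this
    obtain ⟨i, j, hij, hne⟩ := this
    rcases lt_or_gt_of_ne hne with hl | hl
    · exact ⟨(f i).1, hij ▸ chain j i hl⟩
    · exact ⟨(f j).1, hij ▸ chain i j hl⟩
  · rintro hno ⟨x, hx⟩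
    cases hx with
    | single h' => exact hno _ _ h'
    | tail _ h' => exact hno _ _ h'
end
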